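/- Let $m$ and $n$ be positive integers, $l = \operatorname{lcm}(m,n)$, and let $p_1,\dots,p_k$ be the distinct primes dividing $l$. Write $m = p_1^{\alpha_1}\cdots p_k^{\alpha_k}$ and $n = p_1^{\beta_1}\cdots p_k^{\beta_k}$, where the exponents $\alpha_i, \beta_i \ge 0$ may be zero. Then the number of cyclic subgroups of $\mathbb{Z}/m\mathbb{Z} \times \mathbb{Z}/n\mathbb{Z}$ equals $$\frac{1}{\varphi(l)} \prod_{i=1}^k \ \sum_{\substack{1 \le m_i \le p_i^{\max\{\alpha_i,\beta_i\}} \\ p_i \nmid m_i}} \gcd(m_i - 1, p_i^{\alpha_i}) \gcd(m_i - 1, p_i^{\beta_i}).$$ -/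

import Mathlib

open Finset

lemma gcd_prod_of_pc {ι : Type*} (s : Finset ι) (f : ι → ℕ) (c : ℕ)
    (h : Set.Pairwise s fun i j => Nat.Coprime (f i) (f j)) :
    Nat.gcd c (∏ i ∈ s, f i) = ∏ i ∈ s, Nat.gcd c (f i) := by
  induction s using Finset.cons_induction with
  | empty => simp
  | cons a s ha ih =>
    have cop : Nat.Coprime (f a) (∏ i ∈ s, f i) :=
      Nat.Coprime.prod_right fun j hj =>
        h (by simp) (by simp [hj]) (by rintro rfl; exact ha hj)
    rw [Finset.prod_cons, Finset.prod_cons, Nat.Coprime.gcd_mul c cop,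
      ih (h.mono (by simp [Finset.subset_cons]))]

lemma prod_dvd_of_pc {ι : Type*} (s : Finset ι) (f : ι → ℕ) (N : ℕ)
    (h : Set.Pairwise s fun i j => Nat.Coprime (f i) (f j)) (hd : ∀ i ∈ s, f i ∣ N) :
    (∏ i ∈ s, f i) ∣ N := by
  induction s using Finset.cons_induction with
  | empty => simp
  | cons a s ha ih =>
    have cop : Nat.Coprime (f a) (∏ i ∈ s, f i) :=
      Nat.Coprime.prod_right fun j hj =>
        h (by simp) (by simp [hj]) (by rintro rfl; exact ha hj)
    rw [Finset.prod_cons]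
    exact Nat.Coprime.mul_dvd_of_dvd_of_dvd cop (hd a (by simp))
      (ih (h.mono (by simp [Finset.subset_cons])) fun i hi => hd i (by simp [hi]))


lemma card_ker_mul (M c : ℕ) [NeZero M] :
    Nat.card {a : ZMod M // (c : ZMod M) * a = 0} = Nat.gcd c M := by
  have hM : M ≠ 0 := NeZero.ne M
  set g := Nat.gcd c M with hgdef
  have hgM : g ∣ M := Nat.gcd_dvd_right c M
  have hgc : g ∣ c := Nat.gcd_dvd_left c M
  have hgpos : 0 < g := Nat.gcd_pos_of_pos_right c (Nat.pos_of_ne_zero hM)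
  set m' := M / g with hm'def
  have hm'M : m' ∣ M := Nat.div_dvd_of_dvd hgM
  have hgm' : g * m' = M := Nat.mul_div_cancel' hgM
  have key : ∀ a : ZMod M, (c : ZMod M) * a = 0 ↔ a ∈ AddSubgroup.zmultiples ((m' : ℕ) : ZMod M) := by
    intro a
    constructor
    · intro h
      have ha : a = ((a.val : ℕ) : ZMod M) := (ZMod.natCast_rightInverse a).symm
      have hdvd : M ∣ c * a.val := by
        have : ((c * a.val : ℕ) : ZMod M) = 0 := by push_cast; rw [← ha]; exact h
        exact (ZMod.natCast_eq_zero_iff _ _).mp this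
      -- m' ∣ a.val
      have h1 : g * m' ∣ g * ((c / g) * a.val) := by
        rw [hgm']
        calc M ∣ c * a.val := hdvd
          _ = g * ((c / g) * a.val) := by rw [← mul_assoc, Nat.mul_div_cancel' hgc]
      have h2 : m' ∣ (c / g) * a.val := (mul_dvd_mul_iff_left hgpos.ne').mp h1
      have hcop : Nat.Coprime (c / g) m' := Nat.coprime_div_gcd_div_gcd hgpos
      have h3 : m' ∣ a.val := (Nat.Coprime.dvd_of_dvd_mul_left hcop.symm h2)
      have : a = (a.val / m') • ((m' : ℕ) : ZMod M) := by
        rw [nsmul_eq_mul, ← Nat.cast_mul, Nat.div_mul_cancel h3, ← ha]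
      rw [this]
      exact AddSubgroup.nsmul_mem _ (AddSubgroup.mem_zmultiples _) _
    · rintro ⟨k, rfl⟩
      have h0 : (c : ZMod M) * ((m' : ℕ) : ZMod M) = 0 := by
        rw [← Nat.cast_mul]
        refine (ZMod.natCast_eq_zero_iff _ _).mpr ⟨c / g, ?_⟩
        rw [← hgm', mul_comm g m', mul_assoc, Nat.mul_div_cancel' hgc, mul_comm]
      rw [mul_smul_comm, h0, smul_zero]
  calc Nat.card {a : ZMod M // (c : ZMod M) * a = 0}
      = Nat.card (AddSubgroup.zmultiples ((m' : ℕ) : ZMod M)) :=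
        Nat.card_congr (Equiv.subtypeEquivRight key)
    _ = addOrderOf ((m' : ℕ) : ZMod M) := Nat.card_zmultiples _
    _ = M / Nat.gcd M m' := ZMod.addOrderOf_coe m' hM
    _ = M / m' := by rw [Nat.gcd_eq_right hm'M]
    _ = g := Nat.div_div_self hgM hM


def myPiUnits {ι : Type*} {M : ι → Type*} [∀ i, Monoid (M i)] :
    (Π i, M i)ˣ ≃* Π i, (M i)ˣ where
  toFun u i := ⟨u.val i, u.inv i, congrFun u.val_inv i, congrFun u.inv_val i⟩
  invFun v := ⟨fun i => (v i : M i), fun i => ((v i)⁻¹ : (M i)ˣ),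
    by funext i; exact (v i).val_inv, by funext i; exact (v i).inv_val⟩
  left_inv u := Units.ext rfl
  right_inv v := funext fun i => Units.ext rfl
  map_mul' u v := rfl

lemma zmod_smul_eq_nsmul {L : ℕ} [NeZero L] {G : Type*} [AddCommGroup G] [Module (ZMod L) G]
    (c : ZMod L) (x : G) : c • x = c.val • x := by
  have h : c = ((c.val : ℕ) : ZMod L) := (ZMod.natCast_rightInverse c).symm
  conv_lhs => rw [h]
  rw [Nat.cast_smul_eq_nsmul]

lemma isAddCyclic_zmultiples {G : Type*} [AddCommGroup G] (g : G) :
    IsAddCyclic (AddSubgroup.zmultiples g) :=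
  ⟨⟨⟨g, AddSubgroup.mem_zmultiples g⟩, fun x => by
      obtain ⟨k, hk⟩ := x.2
      exact ⟨k, Subtype.ext (by simpa using hk)⟩⟩⟩

lemma card_orbits_eq_card_cyclic (L : ℕ) [NeZero L] (G : Type*) [AddCommGroup G]
    [Module (ZMod L) G] :
    Nat.card (MulAction.orbitRel.Quotient (ZMod L)ˣ G)
      = Nat.card {H : AddSubgroup G // IsAddCyclic H} := by
  have husmul : ∀ (u : (ZMod L)ˣ) (x : G), u • x = ((u : ZMod L)).val • x := fun u x =>
    (Units.smul_def u x).trans (zmod_smul_eq_nsmul _ _)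
  have hord : ∀ x : G, L • x = 0 := fun x => by
    rw [← Nat.cast_smul_eq_nsmul (ZMod L), ZMod.natCast_self, zero_smul]
  have hwd : ∀ g g' : G, (MulAction.orbitRel (ZMod L)ˣ G) g g' →
      AddSubgroup.zmultiples g = AddSubgroup.zmultiples g' := by
    intro g g' hrel
    obtain ⟨u, hu⟩ := hrel
    simp only at hu
    subst hu
    apply le_antisymm
    · rw [AddSubgroup.zmultiples_le, husmul]
      exact AddSubgroup.nsmul_mem _ (AddSubgroup.mem_zmultiples _) _
    · rw [AddSubgroup.zmultiples_le]
      have h2 : ((u⁻¹ : (ZMod L)ˣ) : ZMod L).val • (u • g') = g' := by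
        rw [← husmul, smul_smul, inv_mul_cancel, one_smul]
      exact AddSubgroup.mem_zmultiples_iff.mpr
        ⟨(((u⁻¹ : (ZMod L)ˣ) : ZMod L).val : ℤ), by rw [natCast_zsmul]; exact h2⟩
  apply Nat.card_congr
  refine Equiv.ofBijective
    (Quotient.lift (fun g => (⟨AddSubgroup.zmultiples g, isAddCyclic_zmultiples g⟩ :
        {H : AddSubgroup G // IsAddCyclic H}))
      (fun g g' h => Subtype.ext (hwd g g' h))) ⟨?_, ?_⟩
  · -- injective
    rintro ⟨g⟩ ⟨g'⟩ h
    have heq : AddSubgroup.zmultiples g = AddSubgroup.zmultiples g' :=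
      congrArg Subtype.val h
    apply Quotient.sound
    obtain ⟨c, hc⟩ := AddSubgroup.mem_zmultiples_iff.mp
      (heq ▸ AddSubgroup.mem_zmultiples g : g ∈ AddSubgroup.zmultiples g')
    obtain ⟨d, hd⟩ := AddSubgroup.mem_zmultiples_iff.mp
      (heq ▸ AddSubgroup.mem_zmultiples g' : g' ∈ AddSubgroup.zmultiples g)
    set o := addOrderOf g' with ho
    have hoL : o ∣ L := addOrderOf_dvd_of_nsmul_eq_zero (hord g')
    have hcd : ((o : ℤ)) ∣ d * c - 1 := by
      rw [addOrderOf_dvd_iff_zsmul_eq_zero, sub_smul, mul_smul, hc, hd, one_smul, sub_self]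
    have hu1 : ((c : ZMod o)) * ((d : ZMod o)) = 1 := by
      have h0 : (((d * c - 1 : ℤ)) : ZMod o) = 0 := by
        rw [ZMod.intCast_zmod_eq_zero_iff_dvd]; exact hcd
      push_cast at h0
      linear_combination h0
    have hNeZeroo : NeZero o := ⟨fun h0 => by
      have := NeZero.ne L; exact this (Nat.eq_zero_of_zero_dvd (h0 ▸ hoL))⟩
    let v : (ZMod o)ˣ := ⟨(c : ZMod o), (d : ZMod o), hu1, by rw [mul_comm] at hu1; exact hu1⟩
    obtain ⟨u, hu⟩ := ZMod.unitsMap_surjective (n := o) (m := L) hoL v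
    refine ⟨u, ?_⟩
    have h2 : ((((u : ZMod L).val : ℕ)) : ZMod o) = ((c : ℤ) : ZMod o) := by
      have h3 := congrArg (Units.val) hu
      simp only [ZMod.unitsMap_def, MonoidHom.coe_comp] at h3
      have h4 : ((ZMod.castHom hoL (ZMod o)) (u : ZMod L)) = (c : ZMod o) := h3
      rw [ZMod.castHom_apply, ← ZMod.natCast_val (n := L) (u : ZMod L)] at h4
      exact_mod_cast h4
    have hdvd : ((o : ℤ)) ∣ (((u : ZMod L).val : ℤ) - c) := by
      rw [← ZMod.intCast_zmod_eq_zero_iff_dvd, Int.cast_sub, sub_eq_zero]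
      exact_mod_cast h2
    have hsm : (((u : ZMod L).val : ℤ)) • g' = c • g' := by
      have h0 : ((((u : ZMod L).val : ℤ)) - c) • g' = 0 :=
        addOrderOf_dvd_iff_zsmul_eq_zero.mp hdvd
      rw [sub_smul, sub_eq_zero] at h0
      exact h0
    show u • g' = g
    rw [husmul, ← natCast_zsmul, hsm, hc]
  · -- surjective
    rintro ⟨H, hH⟩
    obtain ⟨⟨h, hmem⟩, hgen⟩ := hH
    refine ⟨Quotient.mk _ h, Subtype.ext ?_⟩
    show AddSubgroup.zmultiples h = H
    apply le_antisymm
    · rw [AddSubgroup.zmultiples_le]; exact hmem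
    · intro x hx
      obtain ⟨k, hk⟩ := hgen ⟨x, hx⟩
      have hkx : k • h = x := congrArg Subtype.val hk
      exact hkx ▸ AddSubgroup.zsmul_mem _ (AddSubgroup.mem_zmultiples h) k

lemma myPiUnits_val {ι : Type*} {M : ι → Type*} [∀ i, Monoid (M i)] (u : (Π i, M i)ˣ) (i : ι) :
    ((myPiUnits u i : M i)) = (u : Π i, M i) i := rfl

lemma count_formula (L m n : ℕ) [NeZero L] [NeZero m] [NeZero n] (hm : m ∣ L) (hn : n ∣ L) :
    Nat.totient L * Nat.card {H : AddSubgroup (ZMod m × ZMod n) // IsAddCyclic H}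
      = ∑ u : (ZMod L)ˣ, Nat.gcd ((u : ZMod L) - 1).val m * Nat.gcd ((u : ZMod L) - 1).val n := by
  set G := ZMod m × ZMod n with hG
  have hLzero : ∀ x : G, L • x = 0 := by
    intro x
    have h1 : L • x.1 = 0 := by
      rw [nsmul_eq_mul, (ZMod.natCast_eq_zero_iff L m).mpr hm, zero_mul]
    have h2 : L • x.2 = 0 := by
      rw [nsmul_eq_mul, (ZMod.natCast_eq_zero_iff L n).mpr hn, zero_mul]
    exact Prod.ext h1 h2
  letI : Module (ZMod L) G := AddCommGroup.zmodModule hLzero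
  letI : Fintype (MulAction.orbitRel.Quotient (ZMod L)ˣ G) := Fintype.ofFinite _
  letI : ∀ u : (ZMod L)ˣ, Fintype (MulAction.fixedBy G u) := fun u => Fintype.ofFinite _
  have hburn := MulAction.sum_card_fixedBy_eq_card_orbits_mul_card_group (ZMod L)ˣ G
  have hfix : ∀ u : (ZMod L)ˣ, Fintype.card (MulAction.fixedBy G u)
      = Nat.gcd ((u : ZMod L) - 1).val m * Nat.gcd ((u : ZMod L) - 1).val n := by
    intro u
    set c : ℕ := ((u : ZMod L) - 1).val with hc
    rw [← Nat.card_eq_fintype_card]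
    have hiff : ∀ x : G, x ∈ MulAction.fixedBy G u ↔
        ((c : ZMod m) * x.1 = 0 ∧ (c : ZMod n) * x.2 = 0) := by
      intro x
      rw [MulAction.mem_fixedBy]
      constructor
      · intro h
        have h0 : ((u : ZMod L) - 1) • x = 0 := by
          rw [sub_smul, one_smul, sub_eq_zero]
          rw [Units.smul_def] at h
          exact h
        rw [zmod_smul_eq_nsmul, ← hc] at h0
        have h1 := congrArg Prod.fst h0
        have h2 := congrArg Prod.snd h0
        simp only [Prod.smul_fst, Prod.smul_snd, Prod.fst_zero, Prod.snd_zero] at h1 h2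
        rw [nsmul_eq_mul] at h1 h2
        exact ⟨h1, h2⟩
      · rintro ⟨h1, h2⟩
        have h0 : ((u : ZMod L) - 1) • x = 0 := by
          rw [zmod_smul_eq_nsmul, ← hc]
          refine Prod.ext ?_ ?_ <;>
            simp only [Prod.smul_fst, Prod.smul_snd, Prod.fst_zero, Prod.snd_zero, nsmul_eq_mul]
          · exact h1
          · exact h2
        rw [sub_smul, one_smul, sub_eq_zero] at h0
        rw [Units.smul_def]
        exact h0
    calc Nat.card (MulAction.fixedBy G u)
        = Nat.card {x : G // (c : ZMod m) * x.1 = 0 ∧ (c : ZMod n) * x.2 = 0} :=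
          Nat.card_congr (Equiv.subtypeEquivRight hiff)
      _ = Nat.card ({a : ZMod m // (c : ZMod m) * a = 0} × {b : ZMod n // (c : ZMod n) * b = 0}) :=
          Nat.card_congr (Equiv.subtypeProdEquivProd (p := fun a : ZMod m => (c : ZMod m) * a = 0) (q := fun b : ZMod n => (c : ZMod n) * b = 0))
      _ = Nat.gcd c m * Nat.gcd c n := by
          rw [Nat.card_prod, card_ker_mul, card_ker_mul]
  calc Nat.totient L * Nat.card {H : AddSubgroup G // IsAddCyclic H}
      = Fintype.card (MulAction.orbitRel.Quotient (ZMod L)ˣ G) * Fintype.card (ZMod L)ˣ := by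
        rw [ZMod.card_units_eq_totient, ← card_orbits_eq_card_cyclic L G,
          Nat.card_eq_fintype_card, mul_comm]
    _ = ∑ u : (ZMod L)ˣ, Fintype.card (MulAction.fixedBy G u) := hburn.symm
    _ = ∑ u : (ZMod L)ˣ, Nat.gcd ((u : ZMod L) - 1).val m * Nat.gcd ((u : ZMod L) - 1).val n := by
        exact Finset.sum_congr rfl fun u _ => hfix u


lemma factor_sum (p e a b : ℕ) [NeZero (p ^ e)] (hp : p.Prime) (he : 1 ≤ e) :
    ∑ w : (ZMod (p^e))ˣ,
        Nat.gcd ((w : ZMod (p^e)) - 1).val (p^a) * Nat.gcd ((w : ZMod (p^e)) - 1).val (p^b)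
      = ∑ x ∈ (Finset.Icc 1 (p^e)).filter (fun x => ¬ p ∣ x),
          Nat.gcd (x - 1) (p^a) * Nat.gcd (x - 1) (p^b) := by
  have hpe1 : 1 < p ^ e := Nat.one_lt_pow (by omega) hp.one_lt
  haveI : Fact (1 < p ^ e) := ⟨hpe1⟩
  have hpdvd : p ∣ p ^ e := dvd_pow_self p (by omega)
  have hval1 : ∀ w : (ZMod (p^e))ˣ, 1 ≤ ((w : ZMod (p^e))).val := by
    intro w
    rcases Nat.eq_zero_or_pos ((w : ZMod (p^e))).val with h | h
    · exfalso
      have hcop := ZMod.val_coe_unit_coprime w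
      rw [h] at hcop
      simp [Nat.Coprime] at hcop
      exact hcop.elim (fun h1 => hp.one_lt.ne' h1) (fun h1 => by omega)
    · exact h
  have hmem : ∀ w : (ZMod (p^e))ˣ, ((w : ZMod (p^e))).val ∈
      (Finset.Icc 1 (p^e)).filter (fun x => ¬ p ∣ x) := by
    intro w
    have hcop := ZMod.val_coe_unit_coprime w
    refine Finset.mem_filter.mpr ⟨Finset.mem_Icc.mpr ⟨hval1 w, (ZMod.val_lt _).le⟩, ?_⟩
    intro hdvd
    have : p ∣ 1 := hcop ▸ Nat.dvd_gcd hdvd hpdvd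
    exact absurd (Nat.eq_one_of_dvd_one this) hp.one_lt.ne'
  have hcopx : ∀ x ∈ (Finset.Icc 1 (p^e)).filter (fun x => ¬ p ∣ x), Nat.Coprime x (p^e) := by
    intro x hx
    obtain ⟨-, hnd⟩ := Finset.mem_filter.mp hx
    exact (Nat.Coprime.pow_right e ((hp.coprime_iff_not_dvd).mpr hnd).symm)
  have hxlt : ∀ x ∈ (Finset.Icc 1 (p^e)).filter (fun x => ¬ p ∣ x), x < p ^ e := by
    intro x hx
    obtain ⟨hicc, hnd⟩ := Finset.mem_filter.mp hx
    obtain ⟨h1, h2⟩ := Finset.mem_Icc.mp hicc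
    rcases h2.lt_or_eq with h | h
    · exact h
    · exact absurd (h ▸ hpdvd) hnd
  rw [← Finset.sum_coe_sort ((Finset.Icc 1 (p^e)).filter (fun x => ¬ p ∣ x))]
  refine Fintype.sum_bijective
    (fun w : (ZMod (p^e))ˣ => (⟨((w : ZMod (p^e))).val, hmem w⟩ :
      ((Finset.Icc 1 (p^e)).filter (fun x => ¬ p ∣ x) : Finset ℕ))) ?_ _ _ ?_
  · constructor
    · intro w w' h
      have hval : ((w : ZMod (p^e))).val = ((w' : ZMod (p^e))).val := congrArg Subtype.val h
      apply Units.ext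
      rw [← ZMod.natCast_rightInverse ((w : ZMod (p^e))), hval,
        ZMod.natCast_rightInverse ((w' : ZMod (p^e)))]
    · rintro ⟨x, hx⟩
      refine ⟨ZMod.unitOfCoprime x (hcopx x hx), ?_⟩
      apply Subtype.ext
      show ((x : ZMod (p^e))).val = x
      rw [ZMod.val_natCast, Nat.mod_eq_of_lt (hxlt x hx)]
  · intro w
    have hsub : ((w : ZMod (p^e)) - 1).val = ((w : ZMod (p^e))).val - 1 := by
      rw [ZMod.val_sub]
      · rw [ZMod.val_one]
      · rw [ZMod.val_one]; exact hval1 w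
    simp only [hsub]

lemma gcd_mod_of_dvd (a N q : ℕ) (h : q ∣ N) : Nat.gcd (a % N) q = Nat.gcd a q := by
  rw [Nat.gcd_comm, Nat.gcd_rec q (a % N), Nat.mod_mod_of_dvd a h, ← Nat.gcd_rec, Nat.gcd_comm]

/-- Corollary 2: for positive integers `m, n` with `l = lcm(m,n)`, `p 0, …, p (k-1)` the
distinct primes dividing `l`, and `m = ∏ pᵢ^{αᵢ}`, `n = ∏ pᵢ^{βᵢ}`, the number of cyclic
subgroups of `ZMod m × ZMod n` equals
`(1/φ(l)) ∏ᵢ ∑_{1 ≤ mᵢ ≤ pᵢ^{max(αᵢ,βᵢ)}, pᵢ ∤ mᵢ} gcd(mᵢ-1,pᵢ^{αᵢ}) gcd(mᵢ-1,pᵢ^{βᵢ})`,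
stated multiplicatively to avoid division. -/
theorem stmt1 (m n : ℕ) (hm : 0 < m) (hn : 0 < n) (k : ℕ)
    (p : Fin k → ℕ) (hp : ∀ i, (p i).Prime) (hinj : Function.Injective p)
    (hprimes : ∀ q : ℕ, q.Prime → (q ∣ Nat.lcm m n ↔ ∃ i, p i = q))
    (α β : Fin k → ℕ)
    (hmfac : m = ∏ i, p i ^ α i) (hnfac : n = ∏ i, p i ^ β i) :
    Nat.totient (Nat.lcm m n) *
        Nat.card {H : AddSubgroup (ZMod m × ZMod n) // IsAddCyclic H}
      = ∏ i, ∑ x ∈ (Finset.Icc 1 (p i ^ max (α i) (β i))).filter (fun x => ¬ p i ∣ x),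
          Nat.gcd (x - 1) (p i ^ α i) * Nat.gcd (x - 1) (p i ^ β i) := by
  haveI : NeZero m := ⟨hm.ne'⟩
  haveI : NeZero n := ⟨hn.ne'⟩
  set γ : Fin k → ℕ := fun i => max (α i) (β i) with hγ
  set L : ℕ := ∏ i, p i ^ γ i with hL
  have hcop : ∀ (a b : ℕ) (i j : Fin k), i ≠ j → Nat.Coprime (p i ^ a) (p j ^ b) :=
    fun a b i j hij =>
      Nat.Coprime.pow a b ((Nat.coprime_primes (hp i) (hp j)).mpr fun h => hij (hinj h))
  have hpwγ : Set.Pairwise (Finset.univ : Finset (Fin k))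
      fun i j => Nat.Coprime (p i ^ γ i) (p j ^ γ j) := fun i _ j _ hij => hcop _ _ i j hij
  have hmL : m ∣ L := by
    rw [hmfac, hL]
    exact Finset.prod_dvd_prod_of_dvd _ _ fun i _ => pow_dvd_pow _ (le_max_left _ _)
  have hnL : n ∣ L := by
    rw [hnfac, hL]
    exact Finset.prod_dvd_prod_of_dvd _ _ fun i _ => pow_dvd_pow _ (le_max_right _ _)
  have hlcm : Nat.lcm m n = L := by
    apply Nat.dvd_antisymm (Nat.lcm_dvd hmL hnL)
    apply prod_dvd_of_pc _ _ _ hpwγ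
    intro i _
    rcases max_choice (α i) (β i) with h | h
    · have : p i ^ γ i ∣ m := by rw [hγ]; simp only [h]; rw [hmfac]; exact Finset.dvd_prod_of_mem _ (Finset.mem_univ i)
      exact this.trans (Nat.dvd_lcm_left m n)
    · have : p i ^ γ i ∣ n := by rw [hγ]; simp only [h]; rw [hnfac]; exact Finset.dvd_prod_of_mem _ (Finset.mem_univ i)
      exact this.trans (Nat.dvd_lcm_right m n)
  haveI : NeZero L := ⟨hlcm ▸ Nat.lcm_ne_zero hm.ne' hn.ne'⟩
  haveI : ∀ i : Fin k, NeZero (p i ^ γ i) := fun i =>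
    ⟨pow_ne_zero _ (hp i).pos.ne'⟩
  have hγ1 : ∀ i, 1 ≤ γ i := by
    intro i
    by_contra hcon
    have hγ0 : γ i = 0 := by omega
    have hdvd : p i ∣ L := hlcm ▸ (hprimes (p i) (hp i)).mpr ⟨i, rfl⟩
    have hcopL : Nat.Coprime (p i) L := by
      rw [hL]
      apply Nat.Coprime.prod_right
      intro j _
      by_cases hij : i = j
      · rw [← hij, hγ0, pow_zero]; exact Nat.coprime_one_right _
      · exact Nat.Coprime.pow_right _
          (by simpa using hcop 1 1 i j hij)
    have : p i = 1 := Nat.eq_one_of_dvd_one (hcopL ▸ Nat.dvd_gcd dvd_rfl hdvd)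
    exact (hp i).one_lt.ne' this
  rw [hlcm, count_formula L m n hmL hnL]
  -- CRT equiv
  have e := ZMod.prodEquivPi (fun i => p i ^ γ i) fun i j hij => hcop _ _ i j hij
  -- note : L is defeq to the product
  have hproj : ∀ (x : ZMod L) (i : Fin k),
      (e x) i = ((x.val : ℕ) : ZMod (p i ^ γ i)) := by
    intro x i
    have hdvdi : p i ^ γ i ∣ L := Finset.dvd_prod_of_mem _ (Finset.mem_univ i)
    have : (Pi.evalRingHom (fun i => ZMod (p i ^ γ i)) i).comp (e : ZMod L →+* Π i, ZMod (p i ^ γ i))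
        = ZMod.castHom hdvdi (ZMod (p i ^ γ i)) := RingHom.ext_zmod _ _
    have h2 := congrArg (fun f => f x) this
    simp only [RingHom.coe_comp, Function.comp_apply, Pi.evalRingHom_apply] at h2
    rw [ZMod.castHom_apply, ← ZMod.natCast_val] at h2
    exact h2
  have hperu : ∀ u : (ZMod L)ˣ,
      Nat.gcd ((u : ZMod L) - 1).val m * Nat.gcd ((u : ZMod L) - 1).val n
        = ∏ i, (Nat.gcd ((e (u : ZMod L)) i - 1).val (p i ^ α i)
            * Nat.gcd ((e (u : ZMod L)) i - 1).val (p i ^ β i)) := by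
    intro u
    set c : ℕ := ((u : ZMod L) - 1).val with hc
    have hterm : ∀ i : Fin k, ((e (u : ZMod L)) i - 1).val = c % (p i ^ γ i) := by
      intro i
      have h1 : (e (u : ZMod L)) i - 1 = e ((u : ZMod L) - 1) i := by
        rw [map_sub, map_one]
        rfl
      rw [h1, hproj, ZMod.val_natCast]
    rw [hmfac, hnfac, gcd_prod_of_pc _ _ _ (fun i _ j _ hij => hcop _ _ i j hij),
      gcd_prod_of_pc _ _ _ (fun i _ j _ hij => hcop _ _ i j hij), ← Finset.prod_mul_distrib]
    apply Finset.prod_congr rfl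
    intro i _
    rw [hterm i, gcd_mod_of_dvd _ _ _ (pow_dvd_pow _ (le_max_left _ _)),
      gcd_mod_of_dvd _ _ _ (pow_dvd_pow _ (le_max_right _ _))]
  rw [Finset.sum_congr rfl fun u _ => hperu u]
  -- reindex over product of unit groups
  have hstep : ∑ u : (ZMod L)ˣ, ∏ i, (Nat.gcd ((e (u : ZMod L)) i - 1).val (p i ^ α i)
            * Nat.gcd ((e (u : ZMod L)) i - 1).val (p i ^ β i))
      = ∑ v : Π i, (ZMod (p i ^ γ i))ˣ, ∏ i,
          (Nat.gcd ((v i : ZMod (p i ^ γ i)) - 1).val (p i ^ α i)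
            * Nat.gcd ((v i : ZMod (p i ^ γ i)) - 1).val (p i ^ β i)) := by
    apply Fintype.sum_equiv ((Units.mapEquiv e.toMulEquiv).trans myPiUnits).toEquiv
    intro u
    apply Finset.prod_congr rfl
    intro i _
    have hcomp : (((((Units.mapEquiv e.toMulEquiv).trans myPiUnits).toEquiv u) i :
        (ZMod (p i ^ γ i))ˣ) : ZMod (p i ^ γ i)) = (e (u : ZMod L)) i := by
      rw [show (((Units.mapEquiv e.toMulEquiv).trans myPiUnits).toEquiv u)
          = myPiUnits (Units.mapEquiv e.toMulEquiv u) from rfl, myPiUnits_val]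
      rfl
    rw [hcomp]
  have hswap := Finset.prod_univ_sum (fun i : Fin k => (Finset.univ : Finset ((ZMod (p i ^ γ i))ˣ)))
    (fun i w => Nat.gcd ((w : ZMod (p i ^ γ i)) - 1).val (p i ^ α i) *
      Nat.gcd ((w : ZMod (p i ^ γ i)) - 1).val (p i ^ β i))
  rw [Fintype.piFinset_univ] at hswap
  rw [hstep, ← hswap]
  apply Finset.prod_congr rfl
  intro i _
  exact factor_sum (p i) (γ i) (α i) (β i) (hp i) (hγ1 i)
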